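/- Let s : A ⥤ B be a functor that is bijective on objects, and let K = Comma s s be the comma category whose objects are triples (a₁, a₀, β : s(a₁) ⟶ s(a₀)), with projections d₁, d₀ : K ⥤ A sending such a triple to a₁ and a₀ respectively. Then for every category D, every functor g : A ⥤ D, and every natural transformation γ : d₁ ⋙ g ⟶ d₀ ⋙ g such that (i) the component of γ at (a, a, 𝟙_{s(a)}) is the identity of g(a) for every object a of A, and (ii) for all objects (a₂, a₁, β') and (a₁, a₀, β) of K the component of γ at (a₂, a₀, β' ≫ β) equals the component of γ at (a₂, a₁, β') followed by the component of γ at (a₁, a₀, β), there exists a unique functor h : B ⥤ D with s ⋙ h = g and with h(β) equal to the component of γ at (a₁, a₀, β) for every object (a₁, a₀, β) of K. (That is, a bijective-on-objects functor exhibits its codomain as the codescent category of its higher kernel.) -/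

import Mathlib

open CategoryTheory

universe v₁ v₂ v₃ u₁ u₂ u₃

section Aux

variable {A : Type u₁} {B : Type u₂} [Category.{v₁} A] [Category.{v₂} B]
  {s : A ⥤ B} {D : Type u₃} [Category.{v₃} D] {g : A ⥤ D}
  (γ : Comma.fst s s ⋙ g ⟶ Comma.snd s s ⋙ g)

lemma codescent_gamma_transport {a₁ a₀ a₁' a₀' : A} (h₁ : a₁ = a₁') (h₀ : a₀ = a₀')
    (β : s.obj a₁ ⟶ s.obj a₀) :
    γ.app ⟨a₁, a₀, β⟩ =
      eqToHom (congrArg g.obj h₁) ≫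
        γ.app ⟨a₁', a₀', eqToHom (congrArg s.obj h₁.symm) ≫ β ≫ eqToHom (congrArg s.obj h₀)⟩ ≫
        eqToHom (congrArg g.obj h₀.symm) := by
  subst h₁; subst h₀
  rw [show eqToHom (congrArg s.obj (Eq.refl a₁).symm) ≫ β ≫ eqToHom (congrArg s.obj (Eq.refl a₀))
    = β by simp]
  simp

lemma codescent_gamma_map {a a' : A} (f : a ⟶ a')
    (hid : ∀ a : A, γ.app ⟨a, a, 𝟙 (s.obj a)⟩ = 𝟙 (g.obj a)) :
    γ.app ⟨a, a', s.map f⟩ = g.map f := by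
  have := γ.naturality (X := ⟨a, a, 𝟙 (s.obj a)⟩) (Y := ⟨a, a', s.map f⟩)
    ⟨𝟙 a, f, by simp⟩
  simp [hid] at this
  erw [CategoryTheory.Functor.map_id, Category.id_comp, Category.id_comp] at this
  exact this

/-- The functor `B ⥤ D` induced by the codescent data. -/
noncomputable def codescentFunctor (hs : Function.Bijective s.obj)
    (hid : ∀ a : A, γ.app ⟨a, a, 𝟙 (s.obj a)⟩ = 𝟙 (g.obj a))
    (hcomp : ∀ (a₂ a₁ a₀ : A) (β' : s.obj a₂ ⟶ s.obj a₁) (β : s.obj a₁ ⟶ s.obj a₀),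
      γ.app ⟨a₂, a₀, β' ≫ β⟩ = γ.app ⟨a₂, a₁, β'⟩ ≫ γ.app ⟨a₁, a₀, β⟩) : B ⥤ D where
  obj b := g.obj ((Equiv.ofBijective s.obj hs).symm b)
  map {b b'} β := γ.app ⟨(Equiv.ofBijective s.obj hs).symm b, (Equiv.ofBijective s.obj hs).symm b',
    eqToHom (Equiv.ofBijective_apply_symm_apply s.obj hs b) ≫ β ≫
      eqToHom (Equiv.ofBijective_apply_symm_apply s.obj hs b').symm⟩
  map_id b := by
    show γ.app _ = _
    rw [show eqToHom (Equiv.ofBijective_apply_symm_apply s.obj hs b) ≫ 𝟙 b ≫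
        eqToHom (Equiv.ofBijective_apply_symm_apply s.obj hs b).symm
      = 𝟙 (s.obj ((Equiv.ofBijective s.obj hs).symm b)) by simp]
    exact hid _
  map_comp {b₀ b₁ b₂} f f' := by
    show γ.app _ = _
    rw [show eqToHom (Equiv.ofBijective_apply_symm_apply s.obj hs b₀) ≫ (f ≫ f') ≫
        eqToHom (Equiv.ofBijective_apply_symm_apply s.obj hs b₂).symm
      = (eqToHom (Equiv.ofBijective_apply_symm_apply s.obj hs b₀) ≫ f ≫
          eqToHom (Equiv.ofBijective_apply_symm_apply s.obj hs b₁).symm) ≫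
        (eqToHom (Equiv.ofBijective_apply_symm_apply s.obj hs b₁) ≫ f' ≫
          eqToHom (Equiv.ofBijective_apply_symm_apply s.obj hs b₂).symm) by simp]
    exact hcomp _ _ _ _ _

end Aux

theorem codescent_of_bijective_on_objects {A : Type u₁} {B : Type u₂}
    [Category.{v₁} A] [Category.{v₂} B] (s : A ⥤ B)
    (hs : Function.Bijective s.obj)
    {D : Type u₃} [Category.{v₃} D] (g : A ⥤ D)
    (γ : Comma.fst s s ⋙ g ⟶ Comma.snd s s ⋙ g)
    (hid : ∀ a : A, γ.app ⟨a, a, 𝟙 (s.obj a)⟩ = 𝟙 (g.obj a))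
    (hcomp : ∀ (a₂ a₁ a₀ : A) (β' : s.obj a₂ ⟶ s.obj a₁) (β : s.obj a₁ ⟶ s.obj a₀),
      γ.app ⟨a₂, a₀, β' ≫ β⟩ = γ.app ⟨a₂, a₁, β'⟩ ≫ γ.app ⟨a₁, a₀, β⟩) :
    ∃! h : B ⥤ D, ∃ e : s ⋙ h = g,
      ∀ (a₁ a₀ : A) (β : s.obj a₁ ⟶ s.obj a₀),
        h.map β =
          eqToHom (Functor.congr_obj e a₁) ≫ γ.app ⟨a₁, a₀, β⟩ ≫
            eqToHom (Functor.congr_obj e a₀).symm := by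
  have hb : ∀ b : B, s.obj ((Equiv.ofBijective s.obj hs).symm b) = b :=
    fun b => (Equiv.ofBijective s.obj hs).apply_symm_apply b
  have ha : ∀ a : A, (Equiv.ofBijective s.obj hs).symm (s.obj a) = a :=
    fun a => (Equiv.ofBijective s.obj hs).symm_apply_apply a
  set h : B ⥤ D := codescentFunctor γ hs hid hcomp with hh
  have spec : ∀ (a₁ a₀ : A) (β : s.obj a₁ ⟶ s.obj a₀),
      h.map β = eqToHom (congrArg g.obj (ha a₁)) ≫ γ.app ⟨a₁, a₀, β⟩ ≫
        eqToHom (congrArg g.obj (ha a₀)).symm := by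
    intro a₁ a₀ β
    show γ.app ⟨_, _, _⟩ = _
    rw [codescent_gamma_transport γ (ha a₁) (ha a₀)]
    congr 2
    rw [show eqToHom (congrArg s.obj (ha a₁).symm) ≫
        (eqToHom (hb (s.obj a₁)) ≫ β ≫ eqToHom (hb (s.obj a₀)).symm) ≫
        eqToHom (congrArg s.obj (ha a₀)) = β by simp]
  have e : s ⋙ h = g := by
    refine CategoryTheory.Functor.ext (h_obj := fun a => congrArg g.obj (ha a)) (h_map := fun a a' f => ?_)
    show h.map (s.map f) = _
    rw [spec, codescent_gamma_map γ f hid]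
    rfl
  refine ⟨h, ⟨e, fun a₁ a₀ β => ?_⟩, fun h' => fun ⟨e', spec'⟩ => ?_⟩
  · rw [spec]
    rfl
  · -- uniqueness
    refine CategoryTheory.Functor.ext (h_obj := fun b => ?_) (h_map := fun b b' f => ?_)
    · calc h'.obj b = h'.obj (s.obj ((Equiv.ofBijective s.obj hs).symm b)) := by rw [hb b]
        _ = g.obj ((Equiv.ofBijective s.obj hs).symm b) := Functor.congr_obj e' _
    · have key := spec' ((Equiv.ofBijective s.obj hs).symm b) ((Equiv.ofBijective s.obj hs).symm b')
        (eqToHom (hb b) ≫ f ≫ eqToHom (hb b').symm)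
      have hm : h'.map (eqToHom (hb b) ≫ f ≫ eqToHom (hb b').symm)
          = eqToHom (congrArg h'.obj (hb b)) ≫ h'.map f ≫
            eqToHom (congrArg h'.obj (hb b').symm) := by
        simp [eqToHom_map]
      rw [hm] at key
      have key2 : h'.map f = eqToHom (congrArg h'.obj (hb b)).symm ≫
          (eqToHom (Functor.congr_obj e' _) ≫
            γ.app ⟨_, _, eqToHom (hb b) ≫ f ≫ eqToHom (hb b').symm⟩ ≫
            eqToHom (Functor.congr_obj e' _).symm) ≫ eqToHom (congrArg h'.obj (hb b')) := by
        rw [← key]; simp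
      rw [key2]
      show _ = _ ≫ h.map f ≫ _
      show _ = _ ≫ γ.app ⟨_, _, eqToHom (hb b) ≫ f ≫ eqToHom (hb b').symm⟩ ≫ _
      simp
      rfl
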